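/- Let A and B be integers with 1 ≤ A ≤ B, and let P be the generating function of the set of Dyck paths none of whose down-run lengths lies in the arithmetic progression {A·r + B : r ≥ 0}. Then, as formal power series, P + z^B·P^B = Σ_{0 ≤ k < A} z^k·P^k + z^A·P^{A+1}. -/

import Mathlib

/-- The height of a path (list of up/down steps, `true` = up = +1, `false` = down = −1)
after its first `k` steps. -/
def heightAt (p : List Bool) (k : ℕ) : ℤ :=
  ((p.take k).count true : ℤ) - ((p.take k).count false : ℤ)

/-- A Dyck path: all partial sums nonnegative and total sum zero. -/
def IsDyck (p : List Bool) : Prop :=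
  (∀ k, 0 ≤ heightAt p k) ∧ heightAt p p.length = 0

/-- A peak at height `h`: an up-step immediately followed by a down-step,
the height after the up-step being `h`. -/
def HasPeakAt (p : List Bool) (h : ℤ) : Prop :=
  ∃ i, p[i]? = some true ∧ p[i+1]? = some false ∧ heightAt p (i+1) = h

/-- A valley at height `h`: a down-step immediately followed by an up-step,
the height after the down-step being `h`. -/
def HasValleyAt (p : List Bool) (h : ℤ) : Prop :=
  ∃ i, p[i]? = some false ∧ p[i+1]? = some true ∧ heightAt p (i+1) = h

/-- `p` has an up-run of length `m`: a maximal block of exactly `m` consecutive up-steps. -/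
def HasUpRun (p : List Bool) (m : ℕ) : Prop :=
  ∃ i, (∀ j, j < m → p[i+j]? = some true) ∧
    (i = 0 ∨ p[i-1]? = some false) ∧
    (p[i+m]? = some false ∨ i + m = p.length)

/-- `p` has a down-run of length `m`: a maximal block of exactly `m` consecutive down-steps. -/
def HasDownRun (p : List Bool) (m : ℕ) : Prop :=
  ∃ i, (∀ j, j < m → p[i+j]? = some false) ∧
    (i = 0 ∨ p[i-1]? = some true) ∧
    (p[i+m]? = some true ∨ i + m = p.length)

/-- Generating function of the set of Dyck paths satisfying `Q`:
the coefficient of `z^n` is the number of such paths of semilength `n`. -/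
noncomputable def genFun (Q : List Bool → Prop) : PowerSeries ℕ :=
  PowerSeries.mk fun n => Set.ncard {p : List Bool | p.length = 2 * n ∧ IsDyck p ∧ Q p}

open List

def hgt (p : List Bool) : ℤ := (p.count true : ℤ) - (p.count false : ℤ)

lemma heightAt_eq (p : List Bool) (k : ℕ) : heightAt p k = hgt (p.take k) := rfl

lemma hgt_append (a b : List Bool) : hgt (a ++ b) = hgt a + hgt b := by
  simp [hgt, List.count_append]; ring

lemma hgt_replicate_false (m : ℕ) : hgt (List.replicate m false) = -(m:ℤ) := by
  simp [hgt, List.count_replicate]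

lemma heightAt_of_length_le (p : List Bool) {k : ℕ} (h : p.length ≤ k) :
    heightAt p k = hgt p := by
  rw [heightAt_eq, List.take_of_length_le h]

lemma heightAt_succ (p : List Bool) {k : ℕ} (h : k < p.length) :
    heightAt p (k+1) = heightAt p k + (if p[k] = true then 1 else -1) := by
  have ht : p.take (k+1) = p.take k ++ [p[k]] := by
    rw [List.take_succ, List.getElem?_eq_getElem h]; rfl
  rw [heightAt_eq, heightAt_eq, ht, hgt_append]
  cases hb : p[k] <;> simp [hgt, hb]

lemma heightAt_append_left (a b : List Bool) {k : ℕ} (h : k ≤ a.length) :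
    heightAt (a ++ b) k = heightAt a k := by
  rw [heightAt_eq, heightAt_eq, List.take_append,
    Nat.sub_eq_zero_of_le h, List.take_zero, List.append_nil]

lemma heightAt_append_right (a b : List Bool) (k : ℕ) :
    heightAt (a ++ b) (a.length + k) = hgt a + heightAt b k := by
  rw [heightAt_eq, heightAt_eq, List.take_append,
    List.take_of_length_le (by omega), hgt_append, Nat.add_sub_cancel_left]

def dRunsAux : List Bool → ℕ → List ℕ
  | [], c => if c = 0 then [] else [c]
  | true :: l, c => (if c = 0 then [] else [c]) ++ dRunsAux l 0
  | false :: l, c => dRunsAux l (c+1)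

def dRuns (p : List Bool) : List ℕ := dRunsAux p 0

lemma dRuns_nil : dRuns [] = [] := rfl

lemma dRuns_cons_true (l : List Bool) : dRuns (true :: l) = dRuns l := by
  simp [dRuns, dRunsAux]

lemma dRunsAux_append_true (a b : List Bool) (c : ℕ) :
    dRunsAux (a ++ true :: b) c = dRunsAux a c ++ dRuns b := by
  induction a generalizing c with
  | nil => simp [dRunsAux, dRuns]
  | cons x t ih => cases x <;> simp [dRunsAux, ih]

lemma dRunsAux_replicate_false (m c : ℕ) (l : List Bool) :
    dRunsAux (List.replicate m false ++ l) c = dRunsAux l (c + m) := by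
  induction m generalizing c with
  | zero => simp
  | succ n ih =>
      rw [List.replicate_succ, List.cons_append]
      show dRunsAux (List.replicate n false ++ l) (c+1) = _
      rw [ih]; congr 1; omega

lemma dRuns_replicate_false {m : ℕ} (hm : 1 ≤ m) :
    dRuns (List.replicate m false) = [m] := by
  have := dRunsAux_replicate_false m 0 []
  simp only [List.append_nil] at this
  rw [dRuns, this, dRunsAux, if_neg (by omega)]
  simp

lemma dRunsAux_head (d : List Bool) {j : ℕ} (hj : 1 ≤ j)
    (hd : d = [] ∨ d.head? = some true) :
    dRunsAux d j = j :: dRuns d := by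
  rcases hd with h | h
  · subst h; rw [dRuns_nil]; show (if j = 0 then _ else _) = _; rw [if_neg (by omega)]
  · rcases d with _ | ⟨x, l⟩
    · simp at h
    · simp at h; subst h
      show (if j = 0 then [] else [j]) ++ dRunsAux l 0 = _
      rw [if_neg (by omega), dRuns_cons_true]; rfl

lemma pos_of_mem_dRunsAux {p : List Bool} {c k : ℕ} (h : k ∈ dRunsAux p c) : 1 ≤ k := by
  induction p generalizing c with
  | nil =>
      simp only [dRunsAux] at h
      split at h <;> simp at h; omega
  | cons x t ih =>
      cases x <;> simp only [dRunsAux] at h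
      · exact ih h
      · rw [List.mem_append] at h
        rcases h with h | h
        · split at h <;> simp at h; omega
        · exact ih h

lemma hasDownRun_cons_true {l : List Bool} {k : ℕ} (hk : 1 ≤ k) :
    HasDownRun (true :: l) k ↔ HasDownRun l k := by
  constructor
  · rintro ⟨i, h1, h2, h3⟩
    rcases i with _ | i'
    · have := h1 0 (by omega); simp at this
    · refine ⟨i', fun j hj => ?_, ?_, ?_⟩
      · have := h1 j hj
        rwa [show i'+1+j = (i'+j)+1 by omega, List.getElem?_cons_succ] at this
      · rcases Nat.eq_zero_or_pos i' with h | h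
        · exact Or.inl h
        · rcases h2 with h2 | h2
          · omega
          · right
            rwa [show i'+1-1 = (i'-1)+1 by omega, List.getElem?_cons_succ] at h2
      · rcases h3 with h3 | h3
        · left; rwa [show i'+1+k = (i'+k)+1 by omega, List.getElem?_cons_succ] at h3
        · right; simp only [List.length_cons] at h3; omega
  · rintro ⟨i, h1, h2, h3⟩
    refine ⟨i+1, fun j hj => ?_, ?_, ?_⟩
    · rw [show i+1+j = (i+j)+1 by omega, List.getElem?_cons_succ]; exact h1 j hj
    · right
      rcases Nat.eq_zero_or_pos i with hi | hi
      · subst hi; simp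
      · rcases h2 with h2 | h2
        · omega
        · rw [show i+1-1 = (i-1)+1 by omega, List.getElem?_cons_succ]
          exact h2
    · rcases h3 with h3 | h3
      · left; rw [show i+1+k = (i+k)+1 by omega, List.getElem?_cons_succ]; exact h3
      · right; simp only [List.length_cons]; omega

lemma repl_get {j t : ℕ} (q : List Bool) (ht : t < j) :
    (List.replicate j false ++ q)[t]? = some false := by
  simp [List.getElem?_append, List.getElem?_replicate, ht]

lemma repl_get' (j t : ℕ) (q : List Bool) :
    (List.replicate j false ++ q)[j+t]? = q[t]? := by
  rw [List.getElem?_append_right (by simp), List.length_replicate, Nat.add_sub_cancel_left]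

lemma hasDownRun_replicate_append {j k : ℕ} (hj : 1 ≤ j) (hk : 1 ≤ k) {q : List Bool}
    (hq : q = [] ∨ q.head? = some true) :
    HasDownRun (List.replicate j false ++ q) k ↔ k = j ∨ HasDownRun q k := by
  have hq0 : q[0]? ≠ some false := by
    rcases hq with h | h
    · subst h; simp
    · rcases q with _ | ⟨x,l⟩; · simp
      simp at h; subst h; simp
  have hlen : (List.replicate j false ++ q).length = j + q.length := by simp
  constructor
  · rintro ⟨i, h1, h2, h3⟩
    by_cases hij : i < j
    · -- i must be 0 and k = j
      have hi0 : i = 0 := by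
        rcases h2 with h | h
        · exact h
        · exfalso
          rw [repl_get q (by omega)] at h
          simp at h
      subst hi0
      left
      have hkj : k ≤ j := by
        by_contra hc
        have := h1 j (by omega)
        rw [show (0:ℕ)+j = j+0 by omega, repl_get' j 0 q] at this
        exact hq0 this
      have hjk : j ≤ k := by
        by_contra hc
        rcases h3 with h | h
        · rw [Nat.zero_add, repl_get q (by omega)] at h; simp at h
        · omega
      omega
    · -- run inside q
      push_neg at hij
      have hi1 : j + 1 ≤ i := by
        rcases Nat.eq_or_lt_of_le hij with h | h
        · exfalso
          have h0 := h1 0 (by omega)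
          rw [Nat.add_zero, ← h] at h0
          have e := repl_get' j 0 q
          rw [Nat.add_zero] at e
          rw [e] at h0
          exact hq0 h0
        · omega
      right
      refine ⟨i - j, fun t ht => ?_, ?_, ?_⟩
      · have := h1 t ht
        rwa [show i+t = j+(i-j+t) by omega, repl_get' j (i-j+t) q] at this
      · right
        rcases h2 with h | h
        · omega
        · rwa [show i-1 = j+(i-j-1) by omega, repl_get' j (i-j-1) q,
            show i-j-1 = i-j-1 by rfl] at h
      · rcases h3 with h | h
        · left; rwa [show i+k = j+(i-j+k) by omega, repl_get' j (i-j+k) q] at h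
        · right; omega
  · rintro (h | ⟨i, h1, h2, h3⟩)
    · refine ⟨0, fun t ht => ?_, Or.inl rfl, ?_⟩
      · rw [Nat.zero_add]; exact repl_get q (by omega)
      · rcases hq with hq' | hq'
        · right; subst hq'; simp only [hlen]; simp; omega
        · left
          rcases q with _ | ⟨x,l⟩; · simp at hq'
          simp at hq'; subst hq'
          rw [Nat.zero_add, h]
          have e := repl_get' j 0 (true :: l)
          rw [Nat.add_zero] at e
          rw [e]; simp
    · have hi1 : 1 ≤ i := by
        rcases Nat.eq_zero_or_pos i with h | h
        · exfalso; subst h; exact hq0 (by simpa using h1 0 (by omega))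
        · exact h
      refine ⟨j + i, fun t ht => ?_, ?_, ?_⟩
      · rw [show j+i+t = j+(i+t) by omega, repl_get' j (i+t) q]; exact h1 t ht
      · right
        rcases h2 with h | h
        · omega
        · rw [show j+i-1 = j+(i-1) by omega, repl_get' j (i-1) q]; exact h
      · rcases h3 with h | h
        · left; rw [show j+i+k = j+(i+k) by omega, repl_get' j (i+k) q]; exact h
        · right; omega

lemma dropWhile_head' (f : Bool → Bool) (l : List Bool) :
    l.dropWhile f = [] ∨ ∃ x t, l.dropWhile f = x :: t ∧ f x = false := by
  induction l with
  | nil => left; rfl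
  | cons x t ih =>
      by_cases h : f x = true
      · rw [List.dropWhile_cons_of_pos h]; exact ih
      · right; exact ⟨x, t, List.dropWhile_cons_of_neg h, by simpa using h⟩

lemma hasDownRun_iff_mem_dRuns : ∀ (p : List Bool) {k : ℕ}, 1 ≤ k →
    (HasDownRun p k ↔ k ∈ dRuns p) := by
  suffices H : ∀ n (p : List Bool), p.length ≤ n → ∀ k, 1 ≤ k →
      (HasDownRun p k ↔ k ∈ dRuns p) by
    intro p k hk; exact H p.length p le_rfl k hk
  intro n
  induction n with
  | zero =>
      intro p hp k hk
      have : p = [] := List.length_eq_zero_iff.mp (by omega)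
      subst this
      constructor
      · rintro ⟨i, h1, -, -⟩
        have := h1 0 (by omega); simp at this
      · intro h; simp [dRuns_nil] at h
  | succ n ih =>
      intro p hp k hk
      rcases p with _ | ⟨x, l⟩
      · constructor
        · rintro ⟨i, h1, -, -⟩
          have := h1 0 (by omega); simp at this
        · intro h; simp [dRuns_nil] at h
      · cases x
        · -- p = false :: l
          have htd : List.takeWhile (fun b => !b) (false :: l) ++
              List.dropWhile (fun b => !b) (false :: l) = false :: l :=
            List.takeWhile_append_dropWhile
          set d := List.dropWhile (fun b => !b) (false :: l) with hd
          set t := List.takeWhile (fun b => !b) (false :: l) with ht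
          have htrep : t = List.replicate t.length false := by
            apply List.eq_replicate_of_mem
            intro b hb
            have := List.mem_takeWhile_imp hb
            simpa using this
          have hj1 : 1 ≤ t.length := by
            rw [ht]
            simp [List.takeWhile]
          have hdhead : d = [] ∨ d.head? = some true := by
            rcases dropWhile_head' (fun b => !b) (false :: l) with h | ⟨y, t', hy, hy2⟩
            · left; rw [hd, h]
            · right; rw [hd, hy]
              simp at hy2
              simp [hy2]
          have hdlen : d.length ≤ n := by
            have h2 : t.length + d.length = (false :: l).length := by
              rw [← htd]; simp
            simp only [List.length_cons] at h2 hp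
            omega
          have hrw : false :: l = List.replicate t.length false ++ d := by
            conv_lhs => rw [← htd]
            rw [← htrep]
          rw [hrw, hasDownRun_replicate_append hj1 hk hdhead]
          have hruns : dRuns (List.replicate t.length false ++ d)
              = t.length :: dRuns d := by
            rw [dRuns, dRunsAux_replicate_false, Nat.zero_add,
              dRunsAux_head d hj1 hdhead]
          rw [hruns, List.mem_cons, ih d hdlen k hk]
        · -- p = true :: l
          rw [hasDownRun_cons_true hk, dRuns_cons_true]
          exact ih l (by simp at hp; omega) k hk

def Nonneg (p : List Bool) : Prop := ∀ k, 0 ≤ heightAt p k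

lemma IsDyck.nonneg {p : List Bool} (h : IsDyck p) : Nonneg p := h.1

lemma IsDyck.hgt_eq {p : List Bool} (h : IsDyck p) : hgt p = 0 := by
  have := h.2; rwa [heightAt_of_length_le p le_rfl] at this

lemma isDyck_of (h1 : Nonneg p) (h2 : hgt p = 0) : IsDyck p :=
  ⟨h1, by rwa [heightAt_of_length_le p le_rfl]⟩

lemma hgt_cons (b : Bool) (x : List Bool) :
    hgt (b :: x) = (if b = true then 1 else -1) + hgt x := by
  cases b <;> simp [hgt] <;> ring

lemma heightAt_cons_succ (b : Bool) (x : List Bool) (k : ℕ) :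
    heightAt (b :: x) (k+1) = (if b = true then 1 else -1) + heightAt x k := by
  rw [heightAt_eq, heightAt_eq, List.take_succ_cons, hgt_cons]

lemma nonneg_append {a b : List Bool} (ha : Nonneg a)
    (hb : ∀ k, 0 ≤ hgt a + heightAt b k) : Nonneg (a ++ b) := by
  intro k
  rcases le_or_gt k a.length with h | h
  · rw [heightAt_append_left a b h]; exact ha k
  · have : k = a.length + (k - a.length) := by omega
    rw [this, heightAt_append_right]; exact hb _

def core (ws : List (List Bool)) : List Bool := (ws.map (· ++ [true])).flatten

def glue (ws : List (List Bool)) : List Bool :=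
  core ws ++ List.replicate ws.length false

lemma core_nil : core [] = [] := rfl

lemma core_cons (w : List Bool) (ws : List (List Bool)) :
    core (w :: ws) = w ++ true :: core ws := by
  simp [core]

lemma hgt_core {ws : List (List Bool)} (h : ∀ w ∈ ws, hgt w = 0) :
    hgt (core ws) = ws.length := by
  induction ws with
  | nil => simp [core_nil, hgt]
  | cons w t ih =>
      rw [core_cons, hgt_append, hgt_cons, h w (by simp),
        ih (fun w hw => h w (by simp [hw]))]
      simp; ring

lemma nonneg_core {ws : List (List Bool)} (h : ∀ w ∈ ws, IsDyck w) :
    Nonneg (core ws) := by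
  induction ws with
  | nil => intro k; simp [core_nil, heightAt, hgt]
  | cons w t ih =>
      rw [core_cons]
      apply nonneg_append (h w (by simp)).nonneg
      intro k
      rw [(h w (by simp)).hgt_eq]
      rcases k with _ | k
      · simp [heightAt]
      · rw [heightAt_cons_succ]
        have := ih (fun w hw => h w (by simp [hw])) k
        simp; omega

lemma length_core (ws : List (List Bool)) :
    (core ws).length = (ws.map List.length).sum + ws.length := by
  induction ws with
  | nil => simp [core_nil]
  | cons w t ih => rw [core_cons]; simp [ih]; omega

lemma dRuns_core_append (ws : List (List Bool)) (q : List Bool) :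
    dRuns (core ws ++ q) = (ws.map dRuns).flatten ++ dRuns q := by
  induction ws with
  | nil => simp [core_nil]
  | cons w t ih =>
      rw [core_cons]
      have : (w ++ true :: core t) ++ q = w ++ true :: (core t ++ q) := by simp
      rw [this]
      show dRunsAux (w ++ true :: (core t ++ q)) 0 = _
      rw [dRunsAux_append_true, ih]
      simp [dRuns]

lemma isDyck_glue {ws : List (List Bool)} (h : ∀ w ∈ ws, IsDyck w) :
    IsDyck (glue ws) := by
  have hc : hgt (core ws) = ws.length := hgt_core (fun w hw => (h w hw).hgt_eq)
  apply isDyck_of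
  · apply nonneg_append (nonneg_core h)
    intro k
    rw [hc, heightAt_eq, List.take_replicate, hgt_replicate_false]
    have : min k ws.length ≤ ws.length := min_le_right _ _
    have : ((min k ws.length : ℕ) : ℤ) ≤ (ws.length : ℤ) := by exact_mod_cast this
    omega
  · rw [glue, hgt_append, hc, hgt_replicate_false]; ring

lemma length_glue (ws : List (List Bool)) :
    (glue ws).length = (ws.map List.length).sum + 2 * ws.length := by
  rw [glue]; simp [length_core]; omega

lemma dRuns_glue {ws : List (List Bool)} (hm : 1 ≤ ws.length) :
    dRuns (glue ws) = (ws.map dRuns).flatten ++ [ws.length] := by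
  rw [glue, dRuns_core_append, dRuns_replicate_false hm]

/-- decomposition existence -/
lemma exists_core : ∀ (q : List Bool) (m : ℕ), Nonneg q → hgt q = (m:ℤ) →
    (q = [] ∨ q.getLast? = some true) →
    ∃ ws : List (List Bool), ws.length = m ∧ (∀ w ∈ ws, IsDyck w) ∧ q = core ws := by
  suffices H : ∀ n (q : List Bool), q.length ≤ n → ∀ (m : ℕ), Nonneg q → hgt q = (m:ℤ) →
      (q = [] ∨ q.getLast? = some true) →
      ∃ ws : List (List Bool), ws.length = m ∧ (∀ w ∈ ws, IsDyck w) ∧ q = core ws by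
    intro q m; exact H q.length q le_rfl m
  intro n
  induction n with
  | zero =>
      intro q hq m h1 h2 h3
      have : q = [] := List.length_eq_zero_iff.mp (by omega)
      subst this
      have : m = 0 := by simp [hgt] at h2; omega
      subst this
      exact ⟨[], rfl, by simp, rfl⟩
  | succ n ih =>
      intro q hq m h1 h2 h3
      rcases Nat.eq_zero_or_pos m with hm | hm
      · -- m = 0 : q must be []
        subst hm
        rcases h3 with h3 | h3
        · subst h3; exact ⟨[], rfl, by simp, rfl⟩
        · exfalso
          obtain ⟨q', rfl⟩ : ∃ q', q = q' ++ [true] := by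
            rcases List.eq_nil_or_concat q with h | ⟨q', b, hq'⟩
            · subst h; simp at h3
            · rw [List.concat_eq_append] at hq'
              subst hq'
              rw [List.getLast?_append_of_ne_nil _ (by simp)] at h3
              simp at h3
              subst h3
              exact ⟨q', rfl⟩
          have e1 : heightAt (q' ++ [true]) q'.length = hgt q' := by
            rw [heightAt_append_left _ _ le_rfl, heightAt_of_length_le _ le_rfl]
          have e2 : hgt (q' ++ [true]) = hgt q' + 1 := by
            rw [hgt_append]; simp [hgt]
          have := h1 q'.length
          rw [e1] at this
          rw [e2] at h2
          omega
      · -- m ≥ 1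
        have hqne : q ≠ [] := by
          intro h; subst h; simp [hgt] at h2; omega
        have hlen1 : 1 ≤ q.length := List.length_pos_iff.mpr hqne
        set L := q.length with hL
        have hP0 : heightAt q 0 = 0 := by simp [heightAt]
        set j := Nat.findGreatest (fun t => heightAt q t = 0) L with hj
        have hPj : heightAt q j = 0 :=
          Nat.findGreatest_spec (P := fun t => heightAt q t = 0) (Nat.zero_le _) hP0
        have hjle : j ≤ L := Nat.findGreatest_le _
        have hgrt : ∀ u, j < u → u ≤ L → heightAt q u ≠ 0 := by
          intro u hu1 hu2
          exact Nat.findGreatest_is_greatest (P := fun t => heightAt q t = 0) hu1 hu2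
        have hpos : ∀ u, j < u → u ≤ L → 1 ≤ heightAt q u := by
          intro u hu1 hu2
          have := h1 u
          have := hgrt u hu1 hu2
          omega
        have hjlt : j < L := by
          rcases Nat.eq_or_lt_of_le hjle with h | h
          · exfalso
            have := hgrt L
            have hqL : heightAt q L = m := by rw [heightAt_of_length_le q le_rfl, h2]
            rw [h] at hPj
            rw [hPj] at hqL
            omega
          · exact h
        have hqj : q[j] = true := by
          have hs := heightAt_succ q (k := j) hjlt
          have hp1 := hpos (j+1) (by omega) (by omega)
          rw [hPj] at hs
          by_contra hc
          rw [if_neg hc] at hs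
          omega
        set w := q.take j with hw
        set r := q.drop (j+1) with hr
        have hq_eq : q = w ++ true :: r := by
          conv_lhs => rw [← List.take_append_drop j q]
          congr 1
          rw [List.drop_eq_getElem_cons hjlt, hqj]
        have hwlen : w.length = j := List.length_take_of_le (by omega)
        -- w is Dyck
        have hwd : IsDyck w := by
          apply isDyck_of
          · intro t
            rw [heightAt_eq, hw, List.take_take]
            have : hgt (q.take (min t j)) = heightAt q (min t j) := rfl
            rw [this]
            exact h1 _
          · exact hPj
        -- heights in r
        have hrht : ∀ t, heightAt q (j+1+t) = 1 + heightAt r t := by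
          intro t
          have e : q = (w ++ [true]) ++ r := by rw [hq_eq]; simp
          have e2 : (w ++ [true]).length = j + 1 := by simp [hwlen]
          conv_lhs => rw [e]
          rw [show j+1+t = (w ++ [true]).length + t by rw [e2]]
          rw [heightAt_append_right, hgt_append, hwd.hgt_eq]
          simp [hgt]
        have hrlen : r.length = L - (j+1) := by rw [hr, List.length_drop]
        have hrhgt : hgt r = ((m:ℤ) - 1) := by
          have := hrht r.length
          rw [heightAt_of_length_le r le_rfl] at this
          have e3 : j + 1 + r.length = L := by omega
          rw [e3, heightAt_of_length_le q le_rfl, h2] at this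
          omega
        have hrnn : Nonneg r := by
          intro t
          rcases le_or_gt t r.length with h | h
          · have := hpos (j+1+t) (by omega) (by omega)
            rw [hrht t] at this
            omega
          · rw [heightAt_of_length_le r (by omega), hrhgt]
            have : (1:ℤ) ≤ m := by exact_mod_cast hm
            omega
        have hrlast : r = [] ∨ r.getLast? = some true := by
          rcases hre : r with _ | ⟨y, t⟩
          · exact Or.inl rfl
          · right
            rcases h3 with h3 | h3
            · exact absurd h3 hqne
            · rw [hq_eq, List.getLast?_append_of_ne_nil _ (by simp)] at h3
              rw [show true :: r = [true] ++ r from rfl,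
                List.getLast?_append_of_ne_nil _ (by rw [hre]; simp)] at h3
              rw [← hre]
              exact h3
        have hrshort : r.length ≤ n := by omega
        obtain ⟨ws', hws1, hws2, hws3⟩ :=
          ih r hrshort (m-1) hrnn (by rw [hrhgt]; push_cast; omega) hrlast
        refine ⟨w :: ws', by simp [hws1]; omega, ?_, ?_⟩
        · intro x hx
          rcases List.mem_cons.mp hx with hx | hx
          · exact hx ▸ hwd
          · exact hws2 x hx
        · rw [core_cons, ← hws3, hq_eq]

lemma core_len_aux {w w' : List Bool} {t t' : List (List Bool)}
    (hw : IsDyck w) (hw' : IsDyck w') (ht : ∀ x ∈ t, IsDyck x)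
    (heq : w ++ true :: core t = w' ++ true :: core t')
    (hlt : w.length < w'.length) : False := by
  have hle : w'.length ≤ (w ++ true :: core t).length := by
    rw [heq]; simp
  have h1 : heightAt (w ++ true :: core t) w'.length = 0 := by
    rw [heq, heightAt_append_left _ _ le_rfl, heightAt_of_length_le _ le_rfl, hw'.hgt_eq]
  have h2 : heightAt (w ++ true :: core t) w'.length
      = 1 + heightAt (core t) (w'.length - w.length - 1) := by
    have e : w ++ true :: core t = (w ++ [true]) ++ core t := by simp
    rw [e, show w'.length = (w ++ [true]).length + (w'.length - w.length - 1) by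
      simp; omega]
    rw [heightAt_append_right, hgt_append, hw.hgt_eq]
    simp [hgt]
    congr 1
    omega
  have h3 := nonneg_core ht (w'.length - w.length - 1)
  omega

lemma core_inj : ∀ {ws ws' : List (List Bool)}, (∀ w ∈ ws, IsDyck w) →
    (∀ w ∈ ws', IsDyck w) → ws.length = ws'.length → core ws = core ws' → ws = ws' := by
  intro ws
  induction ws with
  | nil =>
      intro ws' _ _ hl _
      symm
      rw [← List.length_eq_zero_iff]
      simpa using hl.symm
  | cons w t ih =>
      intro ws' h h' hl heq
      rcases ws' with _ | ⟨w', t'⟩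
      · simp at hl
      rw [core_cons, core_cons] at heq
      have hww' : w.length = w'.length := by
        by_contra hc
        rcases Nat.lt_or_ge w.length w'.length with h1 | h1
        · exact core_len_aux (h w (by simp)) (h' w' (by simp))
            (fun x hx => h x (by simp [hx])) heq h1
        · exact core_len_aux (h' w' (by simp)) (h w (by simp))
            (fun x hx => h' x (by simp [hx])) heq.symm (by omega)
      obtain ⟨hw_eq, htl⟩ := List.append_inj heq hww'
      have hcore : core t = core t' := by
        injection htl
      have ht_eq : t = t' := by
        apply ih (fun x hx => h x (by simp [hx])) (fun x hx => h' x (by simp [hx]))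
          (by simpa using hl) hcore
      rw [hw_eq, ht_eq]

lemma glue_inj {ws ws' : List (List Bool)} (h : ∀ w ∈ ws, IsDyck w)
    (h' : ∀ w ∈ ws', IsDyck w) (heq : glue ws = glue ws') : ws = ws' := by
  have hlen : ws.length = ws'.length := by
    rcases Nat.eq_zero_or_pos ws.length with h0 | h0
    · rw [List.length_eq_zero_iff] at h0
      subst h0
      have : (glue ws').length = 0 := by rw [← heq]; rfl
      rw [length_glue] at this
      simp
      omega
    · rcases Nat.eq_zero_or_pos ws'.length with h0' | h0'
      · rw [List.length_eq_zero_iff] at h0'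
        subst h0'
        have : (glue ws).length = 0 := by rw [heq]; rfl
        rw [length_glue] at this
        omega
      · have e1 := dRuns_glue h0
        have e2 := dRuns_glue h0'
        rw [heq, e2] at e1
        have := congrArg List.getLast? e1
        rw [List.getLast?_append_of_ne_nil _ (by simp),
          List.getLast?_append_of_ne_nil _ (by simp)] at this
        simpa using this.symm
  have hcore : core ws = core ws' := by
    rw [glue, glue, hlen] at heq
    exact List.append_cancel_right heq
  exact core_inj h h' hlen hcore

lemma exists_glue {p : List Bool} (hp : IsDyck p) :
    ∃ ws : List (List Bool), (∀ w ∈ ws, IsDyck w) ∧ p = glue ws := by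
  obtain ⟨q, m, hpq, hqlast⟩ :
      ∃ (q : List Bool) (m : ℕ), p = q ++ List.replicate m false ∧
        (q = [] ∨ q.getLast? = some true) := by
    refine ⟨(p.reverse.dropWhile (fun b => !b)).reverse,
      (p.reverse.takeWhile (fun b => !b)).length, ?_, ?_⟩
    · have htd := List.takeWhile_append_dropWhile (p := fun b => !b) (l := p.reverse)
      have htrep : p.reverse.takeWhile (fun b => !b)
          = List.replicate (p.reverse.takeWhile (fun b => !b)).length false := by
        apply List.eq_replicate_of_mem
        intro b hb
        have := List.mem_takeWhile_imp hb
        simpa using this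
      have h2 := congrArg List.reverse htd
      rw [List.reverse_append, List.reverse_reverse] at h2
      conv_lhs => rw [← h2]
      rw [htrep]
      simp
    · rcases dropWhile_head' (fun b => !b) p.reverse with h | ⟨y, t', hy, hy2⟩
      · left; rw [h]; rfl
      · right
        simp at hy2
        subst hy2
        rw [hy]
        simp
  have hqh : hgt q = (m:ℤ) := by
    have h0 := hp.hgt_eq
    rw [hpq, hgt_append, hgt_replicate_false] at h0
    omega
  have hq_nonneg : Nonneg q := by
    intro k
    rcases le_or_gt k q.length with h | h
    · have := hp.1 k
      rw [hpq, heightAt_append_left _ _ h] at this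
      exact this
    · rw [heightAt_of_length_le q (by omega), hqh]
      positivity
  obtain ⟨ws, hws1, hws2, hws3⟩ := exists_core q m hq_nonneg hqh hqlast
  exact ⟨ws, hws2, by rw [hpq, hws3, glue, hws1]⟩

open scoped Classical

def Valid (A B : ℕ) (p : List Bool) : Prop := ∀ r : ℕ, ¬ HasDownRun p (A * r + B)

def DSet (A B n : ℕ) : Set (List Bool) :=
  {p | p.length = 2 * n ∧ IsDyck p ∧ Valid A B p}

def TSet (A B m s : ℕ) : Set (List (List Bool)) :=
  {ws | ws.length = m ∧ (∀ w ∈ ws, IsDyck w ∧ Valid A B w) ∧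
    (ws.map List.length).sum = 2 * s}

lemma coeff_genFun (A B n : ℕ) :
    (PowerSeries.coeff n) (genFun (Valid A B)) = (DSet A B n).ncard := by
  rw [genFun, PowerSeries.coeff_mk]; rfl

lemma sset_finite (A B n : ℕ) : (DSet A B n).Finite :=
  (List.finite_length_eq Bool (2*n)).subset (fun p hp => hp.1)

lemma count_tf (p : List Bool) : p.count true + p.count false = p.length := by
  induction p with
  | nil => rfl
  | cons x t ih => cases x <;> simp [List.count_cons] <;> omega

lemma dyck_length_even {p : List Bool} (hp : IsDyck p) :
    p.length = 2 * p.count true := by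
  have h1 := hp.hgt_eq
  have h2 := count_tf p
  rw [hgt] at h1
  omega

lemma valid_iff {A B : ℕ} (hB : 1 ≤ B) (p : List Bool) :
    Valid A B p ↔ ∀ k ∈ dRuns p, ∀ r : ℕ, k ≠ A*r+B := by
  constructor
  · intro h k hk r hkr
    exact h r (by rw [hasDownRun_iff_mem_dRuns p (by omega), ← hkr]; exact hk)
  · intro h r hr
    rw [hasDownRun_iff_mem_dRuns p (by omega)] at hr
    exact h _ hr r rfl

lemma valid_nil (A B : ℕ) (hB : 1 ≤ B) : Valid A B [] := by
  intro r hr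
  rw [hasDownRun_iff_mem_dRuns [] (by omega), dRuns_nil] at hr
  simp at hr

lemma valid_glue_iff {A B : ℕ} (hB : 1 ≤ B) {ws : List (List Bool)}
    (h : ∀ w ∈ ws, IsDyck w) :
    Valid A B (glue ws) ↔
      ((∀ w ∈ ws, Valid A B w) ∧ ∀ r : ℕ, ws.length ≠ A*r+B) := by
  rcases Nat.eq_zero_or_pos ws.length with h0 | h0
  · rw [List.length_eq_zero_iff] at h0
    subst h0
    have hg : glue [] = [] := rfl
    rw [hg]
    constructor
    · intro _
      exact ⟨by simp, fun r => by simp only [List.length_nil]; omega⟩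
    · intro _
      exact valid_nil A B hB
  · rw [valid_iff hB, dRuns_glue h0]
    constructor
    · intro hall
      constructor
      · intro w hw
        rw [valid_iff hB]
        intro k hk
        apply hall
        rw [List.mem_append]
        left
        rw [List.mem_flatten]
        exact ⟨dRuns w, List.mem_map_of_mem hw, hk⟩
      · exact fun r => hall ws.length (by simp) r
    · rintro ⟨h1, h2⟩ k hk r
      rw [List.mem_append] at hk
      rcases hk with hk | hk
      · rw [List.mem_flatten] at hk
        obtain ⟨lw, hlw, hklw⟩ := hk
        obtain ⟨w, hw, rfl⟩ := List.mem_map.mp hlw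
        exact (valid_iff hB w).mp (h1 w hw) k hklw r
      · simp at hk
        subst hk
        exact h2 r

lemma glue_injOn (A B m s : ℕ) : Set.InjOn glue (TSet A B m s) := by
  intro ws hws ws' hws' heq
  exact glue_inj (fun w hw => (hws.2.1 w hw).1) (fun w hw => (hws'.2.1 w hw).1) heq

lemma tset_finite (A B m s : ℕ) : (TSet A B m s).Finite := by
  apply Set.Finite.of_finite_image _ (glue_injOn A B m s)
  apply Set.Finite.subset (List.finite_length_eq Bool (2*s + 2*m))
  rintro _ ⟨ws, hws, rfl⟩
  show (glue ws).length = 2*s + 2*m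
  rw [length_glue, hws.1, hws.2.2]

lemma ncard_biUnion {ι α : Type*} (s : Finset ι) (f : ι → Set α)
    (hfin : ∀ i ∈ s, (f i).Finite)
    (hdisj : ∀ i ∈ s, ∀ j ∈ s, i ≠ j → Disjoint (f i) (f j)) :
    (⋃ i ∈ s, f i).ncard = ∑ i ∈ s, (f i).ncard := by
  induction s using Finset.induction_on with
  | empty => simp
  | @insert a s' ha ih =>
      rw [Finset.set_biUnion_insert, Finset.sum_insert ha]
      rw [Set.ncard_union_eq ?dis ?f1 ?f2]
      · rw [ih (fun i hi => hfin i (Finset.mem_insert_of_mem hi))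
          (fun i hi j hj hij => hdisj i (Finset.mem_insert_of_mem hi) j
            (Finset.mem_insert_of_mem hj) hij)]
      case dis =>
        simp only [Set.disjoint_iUnion_right]
        intro i hi
        exact hdisj a (Finset.mem_insert_self a s') i
          (Finset.mem_insert_of_mem (by simpa using hi)) (fun he => ha (by simp [he] at hi ⊢; exact hi))
      case f1 => exact hfin a (Finset.mem_insert_self a s')
      case f2 =>
        apply Set.Finite.biUnion s'.finite_toSet
        intro i hi
        exact hfin i (Finset.mem_insert_of_mem (by simpa using hi))

lemma ncard_prodd {α β : Type*} (s : Set α) (t : Set β) :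
    (s ×ˢ t).ncard = s.ncard * t.ncard := by
  rw [← Nat.card_coe_set_eq, ← Nat.card_coe_set_eq, ← Nat.card_coe_set_eq,
    Nat.card_congr (Equiv.Set.prod s t), Nat.card_prod]

lemma sset_card (A B n : ℕ) (hB : 1 ≤ B) :
    (DSet A B n).ncard =
      ∑ m ∈ (Finset.range (n+1)).filter (fun m => ∀ r : ℕ, m ≠ A*r+B),
        (TSet A B m (n-m)).ncard := by
  have key : DSet A B n =
      ⋃ m ∈ (Finset.range (n+1)).filter (fun m => ∀ r : ℕ, m ≠ A*r+B),
        glue '' (TSet A B m (n-m)) := by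
    ext p
    constructor
    · rintro ⟨hlen, hdyck, hvalid⟩
      obtain ⟨ws, hws1, rfl⟩ := exists_glue hdyck
      rw [length_glue] at hlen
      rw [valid_glue_iff hB hws1] at hvalid
      have hm : ws.length ≤ n := by omega
      simp only [Set.mem_iUnion]
      refine ⟨ws.length, ?_, ws, ⟨rfl, fun w hw => ⟨hws1 w hw, hvalid.1 w hw⟩, by omega⟩, rfl⟩
      simp only [Finset.mem_filter, Finset.mem_range]
      exact ⟨by omega, hvalid.2⟩
    · intro hp
      simp only [Set.mem_iUnion] at hp
      obtain ⟨m, hm, ws, hws, rfl⟩ := hp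
      simp only [Finset.mem_filter, Finset.mem_range] at hm
      obtain ⟨hws1, hws2, hws3⟩ := hws
      have hdy : ∀ w ∈ ws, IsDyck w := fun w hw => (hws2 w hw).1
      refine ⟨?_, isDyck_glue hdy, ?_⟩
      · rw [length_glue, hws3, hws1]; omega
      · rw [valid_glue_iff hB hdy]
        exact ⟨fun w hw => (hws2 w hw).2, hws1 ▸ hm.2⟩
  rw [key, ncard_biUnion]
  · apply Finset.sum_congr rfl
    intro m hm
    exact Set.ncard_image_of_injOn (glue_injOn A B m (n-m))
  · intro m hm
    exact ((tset_finite A B m (n-m)).image glue)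
  · intro i hi j hj hij
    rw [Set.disjoint_left]
    rintro _ ⟨ws, hws, rfl⟩ ⟨ws', hws', heq⟩
    have := glue_inj (fun w hw => (hws.2.1 w hw).1) (fun w hw => (hws'.2.1 w hw).1) heq.symm
    apply hij
    rw [← hws.1, ← hws'.1, this]

lemma coeff_pow_genFun (A B : ℕ) (hB : 1 ≤ B) (m s : ℕ) :
    (PowerSeries.coeff s) ((genFun (Valid A B))^m) = (TSet A B m s).ncard := by
  induction m generalizing s with
  | zero =>
      rw [pow_zero, PowerSeries.coeff_one]
      rcases Nat.eq_zero_or_pos s with rfl | hs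
      · have : TSet A B 0 0 = {([] : List (List Bool))} := by
          ext ws
          simp [TSet, List.length_eq_zero_iff]
          intro h
          subst h
          simp
        rw [this]
        simp
      · have : TSet A B 0 s = ∅ := by
          ext ws
          simp [TSet, List.length_eq_zero_iff]
          rintro rfl
          simp
          omega
        rw [this]
        simp
        omega
  | succ m ih =>
      rw [pow_succ', PowerSeries.coeff_mul]
      have key : TSet A B (m+1) s =
          ⋃ x ∈ Finset.HasAntidiagonal.antidiagonal s,
            (fun wt : List Bool × List (List Bool) => wt.1 :: wt.2) ''
              ((DSet A B x.1) ×ˢ (TSet A B m x.2)) := by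
        ext ws
        constructor
        · rintro ⟨hlen, hmem, hsum⟩
          rcases ws with _ | ⟨w, t⟩
          · simp at hlen
          have hwd : IsDyck w := (hmem w (by simp)).1
          have hwe := dyck_length_even hwd
          simp only [List.map_cons, List.sum_cons] at hsum
          have hile : w.count true ≤ s := by omega
          simp only [Set.mem_iUnion]
          refine ⟨(w.count true, s - w.count true), ?_, (w, t),
            ⟨⟨?_, hwd, (hmem w (by simp)).2⟩, ?_, ?_, ?_⟩, rfl⟩
          · simp only [Finset.HasAntidiagonal.mem_antidiagonal]; omega
          · exact hwe
          · simpa using hlen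
          · exact fun x hx => hmem x (by simp [hx])
          · simp only []; omega
        · intro hws
          simp only [Set.mem_iUnion] at hws
          obtain ⟨⟨i, j⟩, hij, ⟨w, t⟩, ⟨⟨hw1, hw2, hw3⟩, ht1, ht2, ht3⟩, rfl⟩ := hws
          simp only [Finset.HasAntidiagonal.mem_antidiagonal] at hij
          refine ⟨by simp [ht1], ?_, ?_⟩
          · intro x hx
            rcases List.mem_cons.mp hx with rfl | hx
            · exact ⟨hw2, hw3⟩
            · exact ht2 x hx
          · simp only [List.map_cons, List.sum_cons]
            rw [hw1, ht3]
            omega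
      rw [key, ncard_biUnion]
      · apply Finset.sum_congr rfl
        rintro ⟨i, j⟩ hij
        rw [Set.ncard_image_of_injective _ (fun a b hab => by
          simpa [Prod.ext_iff] using List.cons_eq_cons.mp hab),
          ncard_prodd, coeff_genFun, ih]
      · rintro ⟨i, j⟩ hij
        exact (((sset_finite A B i).prod (tset_finite A B m j)).image _)
      · rintro ⟨i, j⟩ hij ⟨i', j'⟩ hij' hne
        rw [Set.disjoint_left]
        rintro _ ⟨⟨w, t⟩, ⟨hw, ht⟩, rfl⟩ ⟨⟨w', t'⟩, ⟨hw', ht'⟩, heq⟩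
        obtain ⟨rfl, rfl⟩ : w' = w ∧ t' = t := by
          simpa [Prod.ext_iff] using (List.cons_eq_cons.mp heq)
        apply hne
        have e1 : 2 * i = 2 * i' := by rw [← hw.1, ← hw'.1]
        have e2 : 2 * j = 2 * j' := by rw [← ht.2.2, ← ht'.2.2]
        simp only [Prod.mk.injEq]
        omega

lemma master (A B n : ℕ) (hB : 1 ≤ B) :
    (PowerSeries.coeff n) (genFun (Valid A B)) =
      ∑ m ∈ (Finset.range (n+1)).filter (fun m => ∀ r : ℕ, m ≠ A*r+B),
        (PowerSeries.coeff n) (PowerSeries.X^m * (genFun (Valid A B))^m) := by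
  rw [coeff_genFun, sset_card A B n hB]
  apply Finset.sum_congr rfl
  intro m hm
  have hmn : m ≤ n := by
    simp only [Finset.mem_filter, Finset.mem_range] at hm; omega
  rw [← coeff_pow_genFun A B hB m (n-m), mul_comm, PowerSeries.coeff_mul_X_pow',
    if_pos hmn]

lemma coeff_c_zero (A B : ℕ) {n m : ℕ} (h : n < m) :
    (PowerSeries.coeff n) (PowerSeries.X^m * (genFun (Valid A B))^m) = 0 := by
  rw [mul_comm, PowerSeries.coeff_mul_X_pow', if_neg (by omega)]

lemma coeff_final (A B n : ℕ) (hB : 1 ≤ B) :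
    (PowerSeries.coeff n) (PowerSeries.X^A * (genFun (Valid A B))^(A+1)) =
      ∑ m ∈ (Finset.range (n+1)).filter (fun m => ∀ r : ℕ, m ≠ A*r+B),
        (PowerSeries.coeff n)
          (PowerSeries.X^(A+m) * (genFun (Valid A B))^(A+m)) := by
  have e : PowerSeries.X^A * (genFun (Valid A B))^(A+1) =
      (PowerSeries.X^A * (genFun (Valid A B))^A) * (genFun (Valid A B)) := by
    rw [pow_succ]; ring
  rw [e, PowerSeries.coeff_mul]
  have step1 : ∀ uv ∈ Finset.HasAntidiagonal.antidiagonal n,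
      (PowerSeries.coeff uv.1) (PowerSeries.X^A * (genFun (Valid A B))^A) *
        (PowerSeries.coeff uv.2) (genFun (Valid A B)) =
      ∑ m ∈ (Finset.range (n+1)).filter (fun m => ∀ r : ℕ, m ≠ A*r+B),
        (PowerSeries.coeff uv.1) (PowerSeries.X^A * (genFun (Valid A B))^A) *
          (PowerSeries.coeff uv.2)
            (PowerSeries.X^m * (genFun (Valid A B))^m) := by
    rintro ⟨u, v⟩ huv
    simp only [Finset.HasAntidiagonal.mem_antidiagonal] at huv
    rw [master A B v hB, Finset.mul_sum]
    apply Finset.sum_subset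
    · apply Finset.filter_subset_filter
      apply Finset.range_subset_range.mpr
      omega
    · intro x hx hnx
      simp only [Finset.mem_filter, Finset.mem_range] at hx hnx
      have hvx : v < x := by
        by_contra hcon
        exact hnx ⟨by omega, hx.2⟩
      rw [coeff_c_zero A B hvx, mul_zero]
  rw [Finset.sum_congr rfl step1, Finset.sum_comm]
  apply Finset.sum_congr rfl
  intro m hm
  have e2 : PowerSeries.X^(A+m) * (genFun (Valid A B))^(A+m) =
      (PowerSeries.X^A * (genFun (Valid A B))^A) *
        (PowerSeries.X^m * (genFun (Valid A B))^m) := by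
    rw [pow_add, pow_add]; ring
  rw [e2, PowerSeries.coeff_mul]

lemma reindex (A B n : ℕ) (hA : 1 ≤ A) (hAB : A ≤ B) (c : ℕ → ℕ)
    (hc : ∀ m, n < m → c m = 0) :
    (∑ m ∈ (Finset.range (n+1)).filter (fun m => ∀ r : ℕ, m ≠ A*r+B), c m) + c B =
    (∑ k ∈ Finset.range A, c k) +
      ∑ m ∈ (Finset.range (n+1)).filter (fun m => ∀ r : ℕ, m ≠ A*r+B), c (A+m) := by
  have hB : 1 ≤ B := le_trans hA hAB
  set S := (Finset.range (n+1)).filter (fun m => ∀ r : ℕ, m ≠ A*r+B) with hS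
  have hpredlt : ∀ m, m < A → ∀ r : ℕ, m ≠ A*r+B := by
    intro m hm r h
    have : B ≤ A*r+B := Nat.le_add_left _ _
    omega
  have eB : ∑ m ∈ S.filter (fun m => m < A), c m = ∑ k ∈ Finset.range A, c k := by
    rw [show S.filter (fun m => m < A) = (Finset.range A).filter (fun m => m ≤ n) by
      ext m
      simp only [hS, Finset.mem_filter, Finset.mem_range]
      constructor
      · rintro ⟨⟨h1, h2⟩, h3⟩; exact ⟨h3, by omega⟩
      · rintro ⟨h1, h2⟩; exact ⟨⟨by omega, hpredlt m h1⟩, h1⟩]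
    apply Finset.sum_subset (Finset.filter_subset _ _)
    intro x hx hnx
    apply hc
    simp only [Finset.mem_filter, Finset.mem_range] at hx hnx
    by_contra hcon
    exact hnx ⟨hx, by omega⟩
  set Big := (Finset.range (n+1+A)).filter
    (fun m' => (∀ r : ℕ, m' ≠ A*r+B) ∧ A ≤ m') with hBig
  have eI : ∑ m' ∈ Big, c m' = ∑ m ∈ S.filter (fun m => ¬ m < A), c m := by
    symm
    apply Finset.sum_subset
    · intro x hx
      simp only [hS, hBig, Finset.mem_filter, Finset.mem_range] at hx ⊢
      exact ⟨by omega, hx.1.2, by omega⟩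
    · intro x hx hnx
      apply hc
      simp only [hS, hBig, Finset.mem_filter, Finset.mem_range] at hx hnx
      by_contra hcon
      push_neg at hcon
      exact hnx ⟨⟨by omega, hx.2.1⟩, by omega⟩
  have eII : ∑ m ∈ S.erase (B-A), c (A+m) = ∑ m' ∈ Big, c m' := by
    apply Finset.sum_nbij' (i := fun m => A+m) (j := fun m' => m'-A)
    · intro a ha
      simp only [hS, Finset.mem_erase, Finset.mem_filter, Finset.mem_range] at ha
      obtain ⟨hne, han, hpred⟩ := ha
      simp only [hBig, Finset.mem_filter, Finset.mem_range]
      refine ⟨by omega, fun r h => ?_, by omega⟩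
      rcases Nat.eq_zero_or_pos r with rfl | hr
      · simp at h; omega
      · apply hpred (r-1)
        have hrr : A*r = A*(r-1) + A := by
          calc A*r = A*((r-1)+1) := by rw [Nat.sub_add_cancel hr]
          _ = A*(r-1) + A := by ring
        omega
    · intro b hb
      simp only [hBig, Finset.mem_filter, Finset.mem_range] at hb
      obtain ⟨hbn, hpred, hAb⟩ := hb
      simp only [hS, Finset.mem_erase, Finset.mem_filter, Finset.mem_range]
      refine ⟨fun h => ?_, by omega, fun r hh => ?_⟩
      · exact hpred 0 (by omega)
      · apply hpred (r+1)
        have : A*(r+1) = A*r + A := by ring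
        omega
    · intro a ha; omega
    · intro b hb
      simp only [hBig, Finset.mem_filter, Finset.mem_range] at hb
      omega
    · intro a ha; rfl
  rw [← Finset.sum_filter_add_sum_filter_not S (fun m => m < A) c, eB]
  by_cases hBA : B - A ≤ n
  · have hmem : B - A ∈ S := by
      simp only [hS, Finset.mem_filter, Finset.mem_range]
      refine ⟨by omega, fun r h => ?_⟩
      have : B ≤ A*r+B := Nat.le_add_left _ _
      omega
    have e3 : ∑ m ∈ S, c (A+m) = c (A+(B-A)) + ∑ m ∈ S.erase (B-A), c (A+m) :=
      (Finset.add_sum_erase S _ hmem).symm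
    rw [e3, show A+(B-A) = B by omega, eII, eI]
    ring
  · have hmem : B - A ∉ S := by
      simp only [hS, Finset.mem_filter, Finset.mem_range]
      rintro ⟨h1, -⟩
      omega
    have hBn : c B = 0 := hc B (by omega)
    rw [Finset.erase_eq_of_notMem hmem] at eII
    rw [hBn, eII, eI]
    ring

lemma key (A B : ℕ) (hA : 1 ≤ A) (hAB : A ≤ B) :
    genFun (Valid A B) + PowerSeries.X ^ B * (genFun (Valid A B)) ^ B =
      (∑ k ∈ Finset.range A, PowerSeries.X ^ k * (genFun (Valid A B)) ^ k) +
        PowerSeries.X ^ A * (genFun (Valid A B)) ^ (A + 1) := by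
  have hB : 1 ≤ B := le_trans hA hAB
  apply PowerSeries.ext
  intro n
  rw [map_add, map_add, map_sum]
  rw [master A B n hB, coeff_final A B n hB]
  exact reindex A B n hA hAB
    (fun m => (PowerSeries.coeff n) (PowerSeries.X^m * (genFun (Valid A B))^m))
    (fun m hm => coeff_c_zero A B hm)

/-- For `1 ≤ A ≤ B` and `P` the generating function of Dyck paths whose down-run lengths all
avoid `{A·r + B : r ≥ 0}`: `P + z^B P^B = ∑_{0 ≤ k < A} z^k P^k + z^A P^(A+1)`. -/
theorem stmt12 (A B : ℕ) (hA : 1 ≤ A) (hAB : A ≤ B) :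
    let P := genFun (fun p => ∀ r : ℕ, ¬ HasDownRun p (A * r + B))
    P + PowerSeries.X ^ B * P ^ B =
      (∑ k ∈ Finset.range A, PowerSeries.X ^ k * P ^ k) +
        PowerSeries.X ^ A * P ^ (A + 1) := by
  intro P
  exact key A B hA hAB
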